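/- Let a, b, c be integers with b ≥ 1, c ≥ 0, and a + b + c = 1. Define, for integers a, b with b ≥ 1, the polynomial P_{a,b,2}(ξ) = ∑_{k=0}^{b-1} (a(a+1)⋯(a+k-1) / (k! (b-1-k)!)) · 2^{-a-k} ξ^{b-1-k} (with the empty product for k = 0 equal to 1), and P_{a,b,2} = 0 if b ≤ 0. Then for all real ξ: P_{a,b,2}(ξ) · ξ^c = 2^c · ((b+c-1)! / (b-1)!) · P_{a+c,b+c,2}(ξ). -/

import Mathlib

open Finset

/-- The polynomial `P_{a,b,2}` from the paper: for integers `a, b` with `b ≥ 1`,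
`P_{a,b,2}(ξ) = ∑_{k=0}^{b-1} (a(a+1)⋯(a+k-1)/(k!(b-1-k)!)) 2^{-a-k} ξ^{b-1-k}`,
and `P_{a,b,2} = 0` for `b ≤ 0`. -/
noncomputable def Pab2 (a b : ℤ) (ξ : ℝ) : ℝ :=
  if 1 ≤ b then
    ∑ k ∈ Finset.range b.toNat,
      ((∏ i ∈ Finset.range k, ((a : ℝ) + i)) /
          ((Nat.factorial k : ℝ) * (Nat.factorial (b.toNat - 1 - k) : ℝ))) *
        (2 : ℝ) ^ (-a - (k : ℤ)) * ξ ^ (b.toNat - 1 - k)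
  else 0

lemma rising_neg (n k : ℕ) (h : k ≤ n) :
    ∏ i ∈ Finset.range k, (-(n : ℝ) + i) =
      (-1) ^ k * (Nat.factorial n : ℝ) / (Nat.factorial (n - k) : ℝ) := by
  induction k with
  | zero => simp [Nat.factorial_ne_zero]
  | succ k ih =>
    rw [Finset.prod_range_succ, ih (Nat.le_of_succ_le h)]
    have key : (Nat.factorial (n - k) : ℝ) =
        ((n : ℝ) - k) * (Nat.factorial (n - (k + 1)) : ℝ) := by
      have h1 : n - k = (n - (k + 1)) + 1 := by omega
      rw [h1, Nat.factorial_succ]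
      push_cast [Nat.cast_sub (show k + 1 ≤ n from h)]
      ring
    have hne : ((n : ℝ) - k) ≠ 0 := by
      have : (k : ℝ) < (n : ℝ) := by exact_mod_cast h
      linarith
    have h4 : (Nat.factorial (n - (k + 1)) : ℝ) ≠ 0 :=
      Nat.cast_ne_zero.2 (Nat.factorial_ne_zero _)
    rw [key]
    field_simp
    ring

theorem stmt_0 (a b c : ℤ) (hb : 1 ≤ b) (hc : 0 ≤ c) (habc : a + b + c = 1) (ξ : ℝ) :
    Pab2 a b ξ * ξ ^ c.toNat =
      (2 : ℝ) ^ c.toNat * ((Nat.factorial (b + c - 1).toNat : ℝ) /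
        (Nat.factorial (b - 1).toNat : ℝ)) * Pab2 (a + c) (b + c) ξ := by
  have hb1 : (1 : ℤ) ≤ b + c := by omega
  rw [Pab2, Pab2, if_pos hb, if_pos hb1]
  set B := b.toNat with hB
  set C := c.toNat with hC
  have hbB : b = (B : ℤ) := by omega
  have hcC : c = (C : ℤ) := by omega
  have hB1 : 1 ≤ B := by omega
  have hBC : (b + c).toNat = B + C := by omega
  have hbc1 : (b + c - 1).toNat = B + C - 1 := by omega
  have hb1' : (b - 1).toNat = B - 1 := by omega
  have ha : (a : ℝ) = -((B + C - 1 : ℕ) : ℝ) := by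
    have : a = -((B + C - 1 : ℕ) : ℤ) := by omega
    rw [this]; push_cast; ring
  have hac : ((a + c : ℤ) : ℝ) = -((B - 1 : ℕ) : ℝ) := by
    have : a + c = -((B - 1 : ℕ) : ℤ) := by omega
    rw [this]; push_cast; ring
  rw [hBC, hbc1, hb1']
  -- restrict the RHS sum to range B
  rw [show (∑ k ∈ Finset.range (B + C),
      ((∏ i ∈ Finset.range k, (((a + c : ℤ) : ℝ) + i)) /
          ((Nat.factorial k : ℝ) * (Nat.factorial (B + C - 1 - k) : ℝ))) *
        (2 : ℝ) ^ (-(a + c) - (k : ℤ)) * ξ ^ (B + C - 1 - k)) =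
      ∑ k ∈ Finset.range B,
      ((∏ i ∈ Finset.range k, (((a + c : ℤ) : ℝ) + i)) /
          ((Nat.factorial k : ℝ) * (Nat.factorial (B + C - 1 - k) : ℝ))) *
        (2 : ℝ) ^ (-(a + c) - (k : ℤ)) * ξ ^ (B + C - 1 - k) from ?_]
  · rw [Finset.mul_sum, Finset.sum_mul]
    refine Finset.sum_congr rfl fun k hk => ?_
    have hkB : k ≤ B - 1 := by
      have := Finset.mem_range.1 hk; omega
    simp only [ha, hac]
    rw [rising_neg (B + C - 1) k (by omega), rising_neg (B - 1) k (by omega)]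
    have hξ : ξ ^ (B - 1 - k) * ξ ^ C = ξ ^ (B + C - 1 - k) := by
      rw [← pow_add]; congr 1; omega
    have h2 : (2 : ℝ) ^ C * (2 : ℝ) ^ (-(a + c) - (k : ℤ)) = (2 : ℝ) ^ (-a - (k : ℤ)) := by
      rw [← zpow_natCast (2 : ℝ) C, ← zpow_add₀ (two_ne_zero)]
      congr 1; omega
    have e1 : B + C - 1 - k = (B - 1 - k) + C := by omega
    have f1 : (Nat.factorial k : ℝ) ≠ 0 := Nat.cast_ne_zero.2 (Nat.factorial_ne_zero _)
    have f2 : (Nat.factorial (B + C - 1 - k) : ℝ) ≠ 0 := Nat.cast_ne_zero.2 (Nat.factorial_ne_zero _)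
    have f3 : (Nat.factorial (B - 1 - k) : ℝ) ≠ 0 := Nat.cast_ne_zero.2 (Nat.factorial_ne_zero _)
    have f4 : (Nat.factorial (B - 1) : ℝ) ≠ 0 := Nat.cast_ne_zero.2 (Nat.factorial_ne_zero _)
    rw [← hξ, ← h2]
    field_simp
  · refine (Finset.sum_subset (Finset.range_subset_range.2 (Nat.le_add_right B C)) ?_).symm
    intro k hk hk'
    have hBk : B - 1 ∈ Finset.range k := by
      simp only [Finset.mem_range] at *
      omega
    have hz : ((a + c : ℤ) : ℝ) + ((B - 1 : ℕ) : ℝ) = 0 := by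
      rw [hac]; ring
    rw [Finset.prod_eq_zero hBk hz]
    simp
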